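/- arXiv:1102.5065 — 10 statements merged into one kernel-verified Lean document; each statement's English description precedes it below -/
import Mathlib

section
/- For all integers n and k with n ≥ 6 and ⌈(4n-11)/9⌉ ≤ k ≤ (n-5)/2, one has (n-2k-3)·√(1 - 2k/n) / (n-2k-2) ≤ √(1 - (2k+2)/n). -/
theorem stmt_1 (n k : ℤ) (hn : 6 ≤ n) (hkl : ⌈(4 * (n : ℚ) - 11) / 9⌉ ≤ k)
    (hku : (k : ℚ) ≤ ((n : ℚ) - 5) / 2) :
    ((n : ℝ) - 2 * k - 3) * Real.sqrt (1 - 2 * (k : ℝ) / (n : ℝ)) / ((n : ℝ) - 2 * k - 2)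
      ≤ Real.sqrt (1 - (2 * (k : ℝ) + 2) / (n : ℝ)) := by
  have hku' : (k : ℝ) ≤ ((n : ℝ) - 5) / 2 := by exact_mod_cast hku
  have hn' : (0:ℝ) < n := by exact_mod_cast lt_of_lt_of_le (by norm_num) hn
  have ha : (3:ℝ) ≤ (n:ℝ) - 2 * k - 2 := by linarith
  have hx : 0 ≤ 1 - 2 * (k : ℝ) / (n : ℝ) := by
    rw [sub_nonneg, div_le_one hn']; linarith
  have hlhs : 0 ≤ ((n : ℝ) - 2 * k - 3) * Real.sqrt (1 - 2 * (k : ℝ) / (n : ℝ)) /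
      ((n : ℝ) - 2 * k - 2) := by
    apply div_nonneg (mul_nonneg (by linarith) (Real.sqrt_nonneg _)) (by linarith)
  rw [show (1 : ℝ) - (2 * (k:ℝ) + 2) / (n:ℝ) = ((n:ℝ) - 2*k - 2) / n by
      field_simp; ring, ← Real.sqrt_sq hlhs]
  apply Real.sqrt_le_sqrt
  rw [div_pow, mul_pow, Real.sq_sqrt hx, div_le_div_iff₀ (by positivity) hn']
  have e : (1 - 2 * (k:ℝ) / (n:ℝ)) * n = (n:ℝ) - 2 * k := by field_simp
  rw [mul_assoc, e]
  nlinarith [sq_nonneg ((n:ℝ) - 2*k - 3), hn'.le]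
end

section
/- For all integers n and k with n ≥ 6 and ⌈(4n-11)/9⌉ ≤ k ≤ (n-5)/2, the quantity d = (n-2k-3)/(n-2k-2) · √(1-(2k+5/2)/n) - √(1-(2k+9/2)/n) satisfies d > 99 / (4(n+4)·√(n(n-1/2))). -/
lemma core_ineq (N M a b s t : ℝ) (hM3 : 3 ≤ M) (hM9 : 9 * M ≤ N + 4)
    (ha2 : a ^ 2 = M - 1/2) (hb2 : b ^ 2 = M - 5/2)
    (ha0 : 0 < a) (hb0 : 0 ≤ b) (hs0 : 0 < s) (ht0 : 0 < t)
    (h3a : 3 * a ≤ t) :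
    (M - 1) / M * (a / s) - b / s > 99 / (4 * (N + 4) * (s * t)) := by
  have hN : (23:ℝ) ≤ N := by linarith
  have hMpos : (0:ℝ) < M := by linarith
  have hC : (0:ℝ) < (M - 1) * M * (M - 1/2) - (M - 1/4) := by
    nlinarith [mul_nonneg (sub_nonneg.mpr hM3) (sq_nonneg (M - 3)), sq_nonneg (M - 3)]
  have hab : M ^ 2 * (a * b) < (M - 1) * M * (M - 1/2) - (M - 1/4) := by
    apply lt_of_pow_lt_pow_left₀ 2 hC.le
    have h : (M ^ 2 * (a * b)) ^ 2 = M ^ 4 * ((M - 1/2) * (M - 5/2)) := by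
      rw [mul_pow, mul_pow, ha2, hb2]; ring
    rw [h]
    nlinarith [mul_nonneg (sub_nonneg.mpr hM3) (sq_nonneg (M - 3)), sq_nonneg (M - 3),
      mul_nonneg (mul_nonneg (sub_nonneg.mpr hM3) (sub_nonneg.mpr hM3)) (sub_nonneg.mpr hM3)]
  have key1 : (M - 1) / M * a - b > (M - 1/4) / (M ^ 2 * a) := by
    rw [gt_iff_lt, div_lt_iff₀ (by positivity)]
    have expand : ((M - 1) / M * a - b) * (M ^ 2 * a)
        = (M - 1) * M * a ^ 2 - M ^ 2 * (a * b) := by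
      field_simp
    rw [expand, ha2]; linarith
  have key2 : 99 / (4 * (N + 4) * t) ≤ (M - 1/4) / (M ^ 2 * a) := by
    rw [div_le_div_iff₀ (by positivity) (by positivity)]
    have h1 : (M - 1/4) * (4 * (N + 4)) ≥ (M - 1/4) * (36 * M) := by nlinarith
    have h2 : (M - 1/4) * (36 * M) * (3 * a) ≥ 99 * (M ^ 2 * a) := by
      nlinarith [mul_nonneg (mul_nonneg ha0.le hMpos.le) (sub_nonneg.mpr hM3)]
    calc 99 * (M ^ 2 * a) ≤ (M - 1/4) * (36 * M) * (3 * a) := h2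
      _ ≤ (M - 1/4) * (4 * (N + 4)) * (3 * a) :=
          mul_le_mul_of_nonneg_right h1 (by positivity)
      _ ≤ (M - 1/4) * (4 * (N + 4)) * t :=
          mul_le_mul_of_nonneg_left h3a (by nlinarith)
      _ = (M - 1/4) * (4 * (N + 4) * t) := by ring
  have hfinal : 99 / (4 * (N + 4) * t) < (M - 1) / M * a - b :=
    lt_of_le_of_lt key2 key1
  have erw1 : (M - 1) / M * (a / s) - b / s = ((M - 1) / M * a - b) / s := by ring
  have erw2 : 99 / (4 * (N + 4) * (s * t)) = (99 / (4 * (N + 4) * t)) / s := by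
    rw [div_div]; ring_nf
  rw [gt_iff_lt, erw1, erw2]
  gcongr

lemma aux_sqrt_ineq (N M : ℝ) (hM3 : 3 ≤ M) (hM9 : 9 * M ≤ N + 4) :
    (M - 1) / M * Real.sqrt ((M - 1/2) / N) - Real.sqrt ((M - 5/2) / N)
      > 99 / (4 * (N + 4) * Real.sqrt (N * (N - 1/2))) := by
  have hN : (23:ℝ) ≤ N := by linarith
  have hNpos : (0:ℝ) < N := by linarith
  have ha2 : Real.sqrt (M - 1/2) ^ 2 = M - 1/2 := Real.sq_sqrt (by linarith)
  have hb2 : Real.sqrt (M - 5/2) ^ 2 = M - 5/2 := Real.sq_sqrt (by linarith)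
  have ht2 : Real.sqrt (N - 1/2) ^ 2 = N - 1/2 := Real.sq_sqrt (by linarith)
  have ha0 : 0 < Real.sqrt (M - 1/2) := Real.sqrt_pos.mpr (by linarith)
  have hb0 : 0 ≤ Real.sqrt (M - 5/2) := Real.sqrt_nonneg _
  have hs0 : 0 < Real.sqrt N := Real.sqrt_pos.mpr (by linarith)
  have ht0 : 0 < Real.sqrt (N - 1/2) := Real.sqrt_pos.mpr (by linarith)
  have h3a : 3 * Real.sqrt (M - 1/2) ≤ Real.sqrt (N - 1/2) := by
    apply le_of_pow_le_pow_left₀ two_ne_zero ht0.le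
    rw [mul_pow, ha2, ht2]; nlinarith
  have e1 : Real.sqrt ((M - 1/2) / N) = Real.sqrt (M - 1/2) / Real.sqrt N :=
    Real.sqrt_div (by linarith) N
  have e2 : Real.sqrt ((M - 5/2) / N) = Real.sqrt (M - 5/2) / Real.sqrt N :=
    Real.sqrt_div (by linarith) N
  have e3 : Real.sqrt (N * (N - 1/2)) = Real.sqrt N * Real.sqrt (N - 1/2) :=
    Real.sqrt_mul hNpos.le _
  rw [e1, e2, e3]
  exact core_ineq N M _ _ _ _ hM3 hM9 ha2 hb2 ha0 hb0 hs0 ht0 h3a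

theorem stmt_2 (n k : ℤ) (hn : 6 ≤ n) (hkl : ⌈(4 * (n : ℚ) - 11) / 9⌉ ≤ k)
    (hku : (k : ℚ) ≤ ((n : ℚ) - 5) / 2) :
    ((n : ℝ) - 2 * k - 3) / ((n : ℝ) - 2 * k - 2)
        * Real.sqrt (1 - (2 * (k : ℝ) + 5 / 2) / (n : ℝ))
      - Real.sqrt (1 - (2 * (k : ℝ) + 9 / 2) / (n : ℝ))
      > 99 / (4 * ((n : ℝ) + 4) * Real.sqrt ((n : ℝ) * ((n : ℝ) - 1 / 2))) := by
  have hkl' : (4 * (n:ℚ) - 11) / 9 ≤ (k:ℚ) := le_trans (Int.le_ceil _) (by exact_mod_cast hkl)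
  have h9kq : 4 * (n:ℚ) - 11 ≤ 9 * (k:ℚ) := by
    rw [div_le_iff₀ (by norm_num : (0:ℚ) < 9)] at hkl'
    linarith
  have h9k : 4 * n - 11 ≤ 9 * k := by exact_mod_cast h9kq
  have h2kq : 2 * (k:ℚ) ≤ (n:ℚ) - 5 := by
    rw [le_div_iff₀ (by norm_num : (0:ℚ) < 2)] at hku
    linarith
  have h2k : 2 * k ≤ n - 5 := by exact_mod_cast h2kq
  have hM3 : (3:ℝ) ≤ (n:ℝ) - 2 * k - 2 := by
    have : (2 * k : ℝ) ≤ (n:ℝ) - 5 := by exact_mod_cast h2k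
    linarith
  have hM9 : 9 * ((n:ℝ) - 2 * k - 2) ≤ (n:ℝ) + 4 := by
    have : (4 * n - 11 : ℝ) ≤ 9 * k := by exact_mod_cast h9k
    linarith
  have hNpos : (0:ℝ) < (n:ℝ) := by
    have : (6:ℝ) ≤ (n:ℝ) := by exact_mod_cast hn
    linarith
  have e1 : 1 - (2 * (k:ℝ) + 5/2) / (n:ℝ) = (((n:ℝ) - 2 * k - 2) - 1/2) / (n:ℝ) := by
    field_simp; ring
  have e2 : 1 - (2 * (k:ℝ) + 9/2) / (n:ℝ) = (((n:ℝ) - 2 * k - 2) - 5/2) / (n:ℝ) := by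
    field_simp; ring
  have e3 : ((n:ℝ) - 2 * k - 3) = ((n:ℝ) - 2 * k - 2) - 1 := by ring
  rw [e1, e2, e3]
  exact aux_sqrt_ineq (n:ℝ) ((n:ℝ) - 2 * k - 2) hM3 hM9
end

section
/- Let n ≥ 3 and define m = ⌈(4n-11)/9⌉, u_{m-1} = 3·C(m+1,2) + 3·C(m+1-⌊n/3⌋,2) - 3·(m-⌊n/3⌋)·(n/3-⌊n/3⌋), and u_k = ⌈(C(n,2) + (n-2k-3)·u_{k-1})/(n-2k-2)⌉ for k ≥ m. Then for every k with m-1 ≤ k ≤ (n-5)/2, (C(n,2) - u_k)/(C(n,2) - u_{m-1}) ≤ 3·√(1 - (2k+2)/n). -/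
/-- The binomial-type expression C(x,2) = x(x-1)/2 for rational x. -/
def C2 (x : ℚ) : ℚ := x * (x - 1) / 2

set_option maxHeartbeats 1000000 in
theorem stmt_6 (n : ℤ) (hn : 3 ≤ n) (m : ℤ) (hm : m = ⌈(4 * (n : ℚ) - 11) / 9⌉)
    (u : ℤ → ℚ)
    (hum : u (m - 1) = 3 * C2 ((m : ℚ) + 1) + 3 * C2 ((m : ℚ) + 1 - (⌊(n : ℚ) / 3⌋ : ℚ))
        - 3 * ((m : ℚ) - (⌊(n : ℚ) / 3⌋ : ℚ)) * ((n : ℚ) / 3 - (⌊(n : ℚ) / 3⌋ : ℚ)))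
    (hrec : ∀ k : ℤ, m ≤ k →
      u k = (⌈((n : ℚ) * ((n : ℚ) - 1) / 2 + ((n : ℚ) - 2 * k - 3) * u (k - 1))
              / ((n : ℚ) - 2 * k - 2)⌉ : ℚ))
    (hpos : 0 < (n : ℚ) * ((n : ℚ) - 1) / 2 - u (m - 1)) :
    ∀ k : ℤ, m - 1 ≤ k → (k : ℚ) ≤ ((n : ℚ) - 5) / 2 →
      (((n : ℚ) * ((n : ℚ) - 1) / 2 - u k : ℚ) : ℝ)
          / (((n : ℚ) * ((n : ℚ) - 1) / 2 - u (m - 1) : ℚ) : ℝ)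
        ≤ 3 * Real.sqrt (1 - (2 * (k : ℝ) + 2) / (n : ℝ)) := by
  intro k hk1 hk2
  set N : ℚ := (n : ℚ) * ((n : ℚ) - 1) / 2 with hNdef
  have hn' : (3:ℚ) ≤ (n:ℚ) := by exact_mod_cast hn
  have hD : (0:ℝ) < ((N - u (m-1) : ℚ) : ℝ) := by exact_mod_cast hpos
  -- 9 m ≤ 4 n - 3
  have hm9 : (9:ℚ) * (m:ℚ) ≤ 4 * (n:ℚ) - 3 := by
    have h1 := Int.ceil_lt_add_one ((4 * (n : ℚ) - 11) / 9)
    rw [← hm] at h1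
    have h2 : (9:ℚ) * (m:ℚ) < 4 * (n:ℚ) - 2 := by linarith
    have h3 : (9:ℤ) * m < 4 * n - 2 := by exact_mod_cast h2
    have h4 : (9:ℤ) * m ≤ 4 * n - 3 := by omega
    exact_mod_cast h4
  -- one step of the recurrence
  have hstep : ∀ j : ℤ, m ≤ j → 0 < (n:ℚ) - 2*(j:ℚ) - 2 →
      N - u j ≤ (N - u (j-1)) * (((n:ℚ) - 2*(j:ℚ) - 3) / ((n:ℚ) - 2*(j:ℚ) - 2)) := by
    intro j hj hden
    have hle := Int.le_ceil ((N + ((n:ℚ) - 2*(j:ℚ) - 3) * u (j-1)) / ((n:ℚ) - 2*(j:ℚ) - 2))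
    rw [← hrec j hj] at hle
    rw [div_le_iff₀ hden] at hle
    rw [← mul_div_assoc, le_div_iff₀ hden]
    nlinarith [hle]
  -- key quadratic inequality over ℚ
  have hkey : ∀ j : ℤ, m - 1 ≤ j → (j:ℚ) ≤ ((n:ℚ)-5)/2 →
      (n:ℚ) * ((n:ℚ) - 2*(j:ℚ) - 3) ≤ 9 * ((n:ℚ) - 2*(m:ℚ) - 1) * ((n:ℚ) - 2*(j:ℚ) - 2) := by
    intro j hj hj2
    have hj' : (m:ℚ) - 1 ≤ (j:ℚ) := by exact_mod_cast (by exact_mod_cast hj : ((m-1 : ℤ):ℚ) ≤ (j:ℚ))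
    rcases le_or_gt (3*((n:ℚ)-2*(j:ℚ)-2)) (n:ℚ) with h | h
    · nlinarith [mul_nonneg (by linarith : (0:ℚ) ≤ 9*((n:ℚ)-2*(m:ℚ)-1) - ((n:ℚ)-3))
        (by linarith : (0:ℚ) ≤ (n:ℚ)-2*(j:ℚ)-2)]
    · nlinarith [mul_nonneg (by linarith : (0:ℚ) ≤ ((n:ℚ)-2*(m:ℚ)-1) - ((n:ℚ)-2*(j:ℚ)-3))
        (by linarith : (0:ℚ) ≤ 9*((n:ℚ)-2*(j:ℚ)-2)),
        mul_nonneg (by linarith : (0:ℚ) ≤ (n:ℚ)-2*(j:ℚ)-3)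
        (by linarith : (0:ℚ) ≤ 9*((n:ℚ)-2*(j:ℚ)-2) - (n:ℚ))]
  -- main induction
  have hmain : ∀ j : ℤ, m - 1 ≤ j → ((j:ℚ) ≤ ((n:ℚ)-5)/2 →
      ((N - u j : ℚ) : ℝ) ≤ Real.sqrt ((n:ℝ) - 2*(j:ℝ) - 3) / Real.sqrt ((n:ℝ) - 2*(m:ℝ) - 1)
        * ((N - u (m-1) : ℚ) : ℝ)) := by
    refine fun j hj => Int.le_induction
      (motive := fun j _ => ((j:ℚ) ≤ ((n:ℚ)-5)/2 →
        ((N - u j : ℚ) : ℝ) ≤ Real.sqrt ((n:ℝ) - 2*(j:ℝ) - 3) / Real.sqrt ((n:ℝ) - 2*(m:ℝ) - 1)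
          * ((N - u (m-1) : ℚ) : ℝ))) ?_ ?_ j hj
    · intro h2
      have h2' : (m:ℚ) - 1 ≤ ((n:ℚ)-5)/2 := by push_cast at h2; linarith
      have hbq : (0:ℚ) < (n:ℚ) - 2*(m:ℚ) - 1 := by linarith
      have hb : (0:ℝ) < (n:ℝ) - 2*(m:ℝ) - 1 := by exact_mod_cast hbq
      have he : (n:ℝ) - 2*((m-1 : ℤ):ℝ) - 3 = (n:ℝ) - 2*(m:ℝ) - 1 := by push_cast; ring
      rw [he, div_self (Real.sqrt_ne_zero'.mpr hb), one_mul]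
    · intro j hj ih h2
      have h2q : (j:ℚ) + 1 ≤ ((n:ℚ)-5)/2 := by push_cast at h2; linarith
      have hjq : (j:ℚ) ≤ ((n:ℚ)-5)/2 := by linarith
      have ihj := ih hjq
      have hden : (0:ℚ) < (n:ℚ) - 2*((j:ℚ)+1) - 2 := by linarith
      have hs := hstep (j+1) (by omega) (by push_cast; linarith)
      simp only [add_sub_cancel_right] at hs
      -- cast hs to ℝ
      have hsR : ((N - u (j+1) : ℚ) : ℝ) ≤ ((N - u j : ℚ) : ℝ) *
          (((n:ℝ) - 2*(j:ℝ) - 5) / ((n:ℝ) - 2*(j:ℝ) - 4)) := by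
        have : ((N - u (j+1) : ℚ) : ℝ) ≤ (((N - u j) * (((n:ℚ) - 2*((j:ℚ)+1) - 3) / ((n:ℚ) - 2*((j:ℚ)+1) - 2)) : ℚ) : ℝ) := by
          exact_mod_cast (by push_cast at hs ⊢; linarith : N - u (j+1) ≤ (N - u j) * (((n:ℚ) - 2*((j:ℚ)+1) - 3) / ((n:ℚ) - 2*((j:ℚ)+1) - 2)))
        refine this.trans_eq ?_
        push_cast
        ring_nf
      set a : ℝ := (n:ℝ) - 2*(j:ℝ) - 4 with hadef
      have ha3 : (3:ℝ) ≤ a := by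
        have : (3:ℚ) ≤ (n:ℚ) - 2*(j:ℚ) - 4 := by linarith
        have := (by exact_mod_cast this : (3:ℝ) ≤ (n:ℝ) - 2*(j:ℝ) - 4)
        linarith
      have ha0 : (0:ℝ) < a := by linarith
      have hc0 : (0:ℝ) ≤ (a - 1) / a := div_nonneg (by linarith) (by linarith)
      have hBq : (0:ℚ) < (n:ℚ) - 2*(m:ℚ) - 1 := by
        have : (m:ℚ) - 1 ≤ (j:ℚ) := by
          have : ((m-1:ℤ):ℚ) ≤ (j:ℚ) := by exact_mod_cast hj
          push_cast at this; linarith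
        linarith
      have hB : (0:ℝ) < (n:ℝ) - 2*(m:ℝ) - 1 := by exact_mod_cast hBq
      have hsqB : (0:ℝ) < Real.sqrt ((n:ℝ) - 2*(m:ℝ) - 1) := Real.sqrt_pos.mpr hB
      -- rewrite expressions in terms of a
      have e1 : (n:ℝ) - 2*(j:ℝ) - 5 = a - 1 := by rw [hadef]; ring
      have e2 : (n:ℝ) - 2*(j:ℝ) - 3 = a + 1 := by rw [hadef]; ring
      have e3 : (n:ℝ) - 2*((j+1:ℤ):ℝ) - 3 = a - 1 := by rw [hadef]; push_cast; ring
      rw [e1] at hsR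
      rw [e2] at ihj
      rw [e3]
      -- the sqrt step: sqrt (a+1) * ((a-1)/a) ≤ sqrt (a-1)
      have hsq : Real.sqrt (a+1) * ((a - 1) / a) ≤ Real.sqrt (a-1) := by
        have hx0 : (0:ℝ) ≤ Real.sqrt (a+1) * ((a - 1) / a) := by positivity
        rw [Real.le_sqrt hx0 (by linarith : (0:ℝ) ≤ a - 1)]
        rw [mul_pow, Real.sq_sqrt (by linarith : (0:ℝ) ≤ a + 1), div_pow,
          mul_div_assoc', div_le_iff₀ (by positivity : (0:ℝ) < a^2)]
        nlinarith [ha3]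
      calc ((N - u (j+1) : ℚ) : ℝ)
          ≤ ((N - u j : ℚ) : ℝ) * ((a - 1) / a) := hsR
        _ ≤ (Real.sqrt (a+1) / Real.sqrt ((n:ℝ) - 2*(m:ℝ) - 1) * ((N - u (m-1) : ℚ) : ℝ)) * ((a - 1) / a) :=
            mul_le_mul_of_nonneg_right ihj hc0
        _ = (Real.sqrt (a+1) * ((a - 1) / a)) / Real.sqrt ((n:ℝ) - 2*(m:ℝ) - 1) * ((N - u (m-1) : ℚ) : ℝ) := by
            ring
        _ ≤ Real.sqrt (a-1) / Real.sqrt ((n:ℝ) - 2*(m:ℝ) - 1) * ((N - u (m-1) : ℚ) : ℝ) :=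
            mul_le_mul_of_nonneg_right ((div_le_div_iff_of_pos_right hsqB).mpr hsq) (le_of_lt hD)
  -- assemble the final bound
  have hnR : (0:ℝ) < (n:ℝ) := by
    have : (0:ℤ) < n := by omega
    exact_mod_cast this
  have hBq : (0:ℚ) < (n:ℚ) - 2*(m:ℚ) - 1 := by
    have : (m:ℚ) - 1 ≤ (k:ℚ) := by
      have : ((m-1:ℤ):ℚ) ≤ (k:ℚ) := by exact_mod_cast hk1
      push_cast at this; linarith
    linarith
  have hB : (0:ℝ) < (n:ℝ) - 2*(m:ℝ) - 1 := by exact_mod_cast hBq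
  have hsqB : (0:ℝ) < Real.sqrt ((n:ℝ) - 2*(m:ℝ) - 1) := Real.sqrt_pos.mpr hB
  have hk2R : (k:ℝ) ≤ ((n:ℝ) - 5)/2 := by exact_mod_cast hk2
  have hkeyR : (n:ℝ) * ((n:ℝ) - 2*(k:ℝ) - 3) ≤ 9 * ((n:ℝ) - 2*(m:ℝ) - 1) * ((n:ℝ) - 2*(k:ℝ) - 2) := by
    exact_mod_cast hkey k hk1 hk2
  have heq : 1 - (2 * (k:ℝ) + 2) / (n:ℝ) = ((n:ℝ) - 2*(k:ℝ) - 2) / (n:ℝ) := by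
    field_simp
    ring
  have hfin : Real.sqrt ((n:ℝ) - 2*(k:ℝ) - 3) / Real.sqrt ((n:ℝ) - 2*(m:ℝ) - 1)
      ≤ 3 * Real.sqrt (1 - (2 * (k:ℝ) + 2) / (n:ℝ)) := by
    rw [heq, Real.sqrt_div (by linarith : (0:ℝ) ≤ (n:ℝ) - 2*(k:ℝ) - 2) (n:ℝ)]
    rw [← mul_div_assoc]
    rw [div_le_div_iff₀ hsqB (Real.sqrt_pos.mpr hnR)]
    have h1 : Real.sqrt ((n:ℝ) - 2*(k:ℝ) - 3) * Real.sqrt (n:ℝ)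
        = Real.sqrt (((n:ℝ) - 2*(k:ℝ) - 3) * (n:ℝ)) := by
      rw [Real.sqrt_mul (by nlinarith : (0:ℝ) ≤ (n:ℝ) - 2*(k:ℝ) - 3)]
    have h2 : 3 * Real.sqrt ((n:ℝ) - 2*(k:ℝ) - 2) * Real.sqrt ((n:ℝ) - 2*(m:ℝ) - 1)
        = Real.sqrt (9 * (((n:ℝ) - 2*(k:ℝ) - 2) * ((n:ℝ) - 2*(m:ℝ) - 1))) := by
      rw [Real.sqrt_mul (by norm_num : (0:ℝ) ≤ (9:ℝ)),
        Real.sqrt_mul (by linarith : (0:ℝ) ≤ (n:ℝ) - 2*(k:ℝ) - 2),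
        show (9:ℝ) = 3^2 by norm_num, Real.sqrt_sq (by norm_num : (0:ℝ) ≤ (3:ℝ))]
      ring
    rw [h1, h2]
    apply Real.sqrt_le_sqrt
    nlinarith [hkeyR]
  calc ((N - u k : ℚ) : ℝ) / ((N - u (m-1) : ℚ) : ℝ)
      ≤ (Real.sqrt ((n:ℝ) - 2*(k:ℝ) - 3) / Real.sqrt ((n:ℝ) - 2*(m:ℝ) - 1)
          * ((N - u (m-1) : ℚ) : ℝ)) / ((N - u (m-1) : ℚ) : ℝ) :=
        (div_le_div_iff_of_pos_right hD).mpr (hmain k hk1 hk2)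
    _ = Real.sqrt ((n:ℝ) - 2*(k:ℝ) - 3) / Real.sqrt ((n:ℝ) - 2*(m:ℝ) - 1) :=
        mul_div_cancel_right₀ _ (ne_of_gt hD)
    _ ≤ 3 * Real.sqrt (1 - (2 * (k:ℝ) + 2) / (n:ℝ)) := hfin
end

section
/- Let n ≥ 3 and define m = ⌈(4n-11)/9⌉, u_{m-1} = 3·C(m+1,2) + 3·C(m+1-⌊n/3⌋,2) - 3·(m-⌊n/3⌋)·(n/3-⌊n/3⌋), and u_k = ⌈(C(n,2) + (n-2k-3)·u_{k-1})/(n-2k-2)⌉ for k ≥ m. Then for every k with m-1 ≤ k ≤ (n-5)/2, 3·√(1 - (2k+9/2)/n) < (C(n,2) - u_k)/(C(n,2) - u_{m-1}). -/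
lemma key_step (a n v : ℝ) (ha : 3 ≤ a) (hn : 0 < n) (hv0 : 0 < v)
    (hpoly : 2*a^2*(n + a - 1/2) ≤ 3*v*(4*a-1)) :
    3 * Real.sqrt ((2*a-5)/(2*n)) * v + 1 ≤ (a-1)/a * (3 * Real.sqrt ((2*a-1)/(2*n)) * v) := by
  have ha0 : (0:ℝ) < a := by linarith
  set s := Real.sqrt ((2*a-1)/(2*n)) with hs
  set t := Real.sqrt ((2*a-5)/(2*n)) with ht
  have hs2 : s^2 = (2*a-1)/(2*n) := Real.sq_sqrt (by apply div_nonneg <;> linarith)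
  have ht2 : t^2 = (2*a-5)/(2*n) := Real.sq_sqrt (by apply div_nonneg <;> linarith)
  have hs0 : 0 < s := Real.sqrt_pos.mpr (by apply div_pos <;> linarith)
  have ht0 : 0 ≤ t := Real.sqrt_nonneg _
  have hts : t ≤ s := Real.sqrt_le_sqrt (by
    apply div_le_div_of_nonneg_right _ (by linarith)
    linarith)
  have h1' : 2*n*(((a-1)*s - a*t) * ((a-1)*s + a*t)) = 4*a-1 := by
    have e : ((a-1)*s - a*t) * ((a-1)*s + a*t) = (a-1)^2*s^2 - a^2*t^2 := by ring
    rw [e, hs2, ht2]; field_simp; ring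
  have h2 : (a-1)*s + a*t ≤ 2*a*s := by nlinarith
  have hden : 0 < (a-1)*s + a*t := by nlinarith
  have h3 : 2*n*s ≤ n + a - 1/2 := by
    have h4 : (2*n*s)^2 = 2*n*(2*a-1) := by
      have e : (2*n*s)^2 = 4*n^2*s^2 := by ring
      rw [e, hs2]; field_simp; ring
    nlinarith [sq_nonneg (n-a+1/2), mul_pos hn hs0]
  have hdiffpos : 0 < (a-1)*s - a*t := by
    nlinarith [mul_pos hn hden]
  have hd2 : 4*a-1 ≤ 2*n*((a-1)*s - a*t)*(2*a*s) := by
    nlinarith [mul_le_mul_of_nonneg_left h2 (by positivity : (0:ℝ) ≤ 2*n*((a-1)*s - a*t))]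
  have hmain : a ≤ 3*v*((a-1)*s - a*t) := by
    nlinarith [mul_le_mul_of_nonneg_left hd2 (by positivity : (0:ℝ) ≤ 3*v),
      mul_le_mul_of_nonneg_left h3 (by positivity : (0:ℝ) ≤ 2*a^2),
      mul_pos (mul_pos (mul_pos (by norm_num : (0:ℝ)<4) hn) ha0) hs0]
  rw [div_mul_eq_mul_div, le_div_iff₀ ha0]
  nlinarith

lemma v0_pos (N M F v : ℚ)
    (hM1 : (4*N-11)/9 ≤ M) (hM2 : M < (4*N-11)/9 + 1)
    (hF1 : N/3 - 1 < F) (hF2 : F ≤ N/3) (hMle : M - 1 ≤ (N-5)/2)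
    (hv : v = N*(N-1)/2 - (3*(M+1)*M/2 + 3*(M+1-F)*(M-F)/2 - 3*(M-F)*(N/3-F))) :
    0 < v := by
  have hN : 5 ≤ N := by linarith
  have pM : 0 ≤ (M - (4*N-11)/9) * ((4*N-11)/9 + 1 - M) :=
    mul_nonneg (by linarith) (by linarith)
  nlinarith [pM, sq_nonneg (F - N/3), sq_nonneg (F - N/3 + 1), hv]

lemma poly_bound (N M F a v : ℚ)
    (hM1 : (4*N-11)/9 ≤ M) (hM2 : M < (4*N-11)/9 + 1)
    (hF1 : N/3 - 1 < F) (hF2 : F ≤ N/3)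
    (ha1 : 3 ≤ a) (ha2 : a ≤ N - 2*M - 2)
    (hv : v = N*(N-1)/2 - (3*(M+1)*M/2 + 3*(M+1-F)*(M-F)/2 - 3*(M-F)*(N/3-F))) :
    2*a^2*(N + a - 1/2) ≤ 3*v*(4*a-1) := by
  have hA : a ≤ (N+4)/9 := by linarith
  have hN : 23 ≤ N := by linarith
  have pM : 0 ≤ (M - (4*N-11)/9) * ((4*N-11)/9 + 1 - M) :=
    mul_nonneg (by linarith) (by linarith)
  have hq : (N+4)*(20*N-1) ≤ 891*v := by
    nlinarith [pM, sq_nonneg (F - N/3), sq_nonneg (F - N/3 + 1), hv]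
  have hvpos : 0 < v := by nlinarith [hq]
  have t1 : 0 ≤ 2*a*((N+4)/9 - a)*(N + (N+4)/9 + a - 1/2) :=
    mul_nonneg (mul_nonneg (by linarith) (by linarith)) (by linarith)
  have t2 : 0 ≤ v*(a-3) := mul_nonneg (le_of_lt hvpos) (by linarith)
  have t3 : 0 ≤ (891*v - (N+4)*(20*N-1))*a :=
    mul_nonneg (by linarith) (by linarith)
  nlinarith [t1, t2, t3]

theorem stmt_7 (n : ℤ) (hn : 3 ≤ n) (m : ℤ) (hm : m = ⌈(4 * (n : ℚ) - 11) / 9⌉)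
    (u : ℤ → ℚ)
    (hum : u (m - 1) = 3 * C2 ((m : ℚ) + 1) + 3 * C2 ((m : ℚ) + 1 - (⌊(n : ℚ) / 3⌋ : ℚ))
        - 3 * ((m : ℚ) - (⌊(n : ℚ) / 3⌋ : ℚ)) * ((n : ℚ) / 3 - (⌊(n : ℚ) / 3⌋ : ℚ)))
    (hrec : ∀ k : ℤ, m ≤ k →
      u k = (⌈((n : ℚ) * ((n : ℚ) - 1) / 2 + ((n : ℚ) - 2 * k - 3) * u (k - 1))
              / ((n : ℚ) - 2 * k - 2)⌉ : ℚ))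
     :
    ∀ k : ℤ, m - 1 ≤ k → (k : ℚ) ≤ ((n : ℚ) - 5) / 2 →
      3 * Real.sqrt (1 - (2 * (k : ℝ) + 9 / 2) / (n : ℝ))
        < (((n : ℚ) * ((n : ℚ) - 1) / 2 - u k : ℚ) : ℝ)
            / (((n : ℚ) * ((n : ℚ) - 1) / 2 - u (m - 1) : ℚ) : ℝ) := by
  have hnQ : (3:ℚ) ≤ (n:ℚ) := by exact_mod_cast hn
  have hnQ0 : (0:ℚ) < (n:ℚ) := by linarith
  have hMlb : (4*(n:ℚ)-11)/9 ≤ (m:ℚ) := by rw [hm]; exact Int.le_ceil _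
  have hMub : (m:ℚ) < (4*(n:ℚ)-11)/9 + 1 := by rw [hm]; exact Int.ceil_lt_add_one _
  have hFub : ((⌊(n:ℚ)/3⌋ : ℤ):ℚ) ≤ (n:ℚ)/3 := Int.floor_le _
  have hFlb : (n:ℚ)/3 - 1 < ((⌊(n:ℚ)/3⌋ : ℤ):ℚ) := Int.sub_one_lt_floor _
  have humv : (n:ℚ)*((n:ℚ)-1)/2 - u (m-1) =
      (n:ℚ)*((n:ℚ)-1)/2 - (3*((m:ℚ)+1)*(m:ℚ)/2
        + 3*((m:ℚ)+1-((⌊(n:ℚ)/3⌋ : ℤ):ℚ))*((m:ℚ)-((⌊(n:ℚ)/3⌋ : ℤ):ℚ))/2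
        - 3*((m:ℚ)-((⌊(n:ℚ)/3⌋ : ℤ):ℚ))*((n:ℚ)/3-((⌊(n:ℚ)/3⌋ : ℤ):ℚ))) := by
    rw [hum]; simp only [C2]; ring
  -- main induction claim
  have claim : ∀ j : ℤ, m - 1 ≤ j → ((j:ℚ) ≤ ((n:ℚ)-5)/2 →
      3 * Real.sqrt ((2*(n:ℝ) - 4*(j:ℝ) - 9)/(2*(n:ℝ)))
          * (((n:ℚ) * ((n:ℚ) - 1) / 2 - u (m - 1) : ℚ) : ℝ)
        < (((n:ℚ) * ((n:ℚ) - 1) / 2 - u j : ℚ) : ℝ)) := by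
    refine Int.le_induction ?_ ?_
    · intro hble
      push_cast at hble ⊢
      have hMle : (m:ℚ) - 1 ≤ ((n:ℚ)-5)/2 := by linarith
      have hv0 : 0 < (n:ℚ)*((n:ℚ)-1)/2 - u (m-1) :=
        v0_pos (n:ℚ) (m:ℚ) ((⌊(n:ℚ)/3⌋ : ℤ):ℚ) _ hMlb hMub hFlb hFub hMle humv
      have hv0R : (0:ℝ) < (n:ℝ)*((n:ℝ)-1)/2 - (u (m-1) : ℝ) := by
        have := (Rat.cast_lt (K := ℝ)).mpr hv0
        push_cast at this
        linarith
      have hargQ : (2*(n:ℚ) - 4*((m:ℚ)-1) - 9)/(2*(n:ℚ)) < 1/9 := by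
        rw [div_lt_iff₀ (by linarith)]
        linarith
      have hargR : (2*(n:ℝ) - 4*((m:ℝ)-1) - 9)/(2*(n:ℝ)) < (1/3:ℝ)^2 := by
        have := (Rat.cast_lt (K := ℝ)).mpr hargQ
        push_cast at this
        norm_num at this ⊢
        linarith
      have hsq : Real.sqrt ((2*(n:ℝ) - 4*((m:ℝ)-1) - 9)/(2*(n:ℝ))) < 1/3 :=
        (Real.sqrt_lt' (by norm_num)).mpr hargR
      nlinarith [Real.sqrt_nonneg ((2*(n:ℝ) - 4*((m:ℝ)-1) - 9)/(2*(n:ℝ)))]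
    · intro j hj ih hble
      have hbleQ : (j:ℚ) + 1 ≤ ((n:ℚ)-5)/2 := by push_cast at hble; linarith
      have IH := ih (by linarith)
      have hmj1 : m ≤ j + 1 := by omega
      have hmjQ : (m:ℚ) ≤ (j:ℚ) + 1 := by exact_mod_cast hmj1
      have hv0 : 0 < (n:ℚ)*((n:ℚ)-1)/2 - u (m-1) :=
        v0_pos (n:ℚ) (m:ℚ) ((⌊(n:ℚ)/3⌋ : ℤ):ℚ) _ hMlb hMub hFlb hFub (by linarith) humv
      -- the recurrence bound in ℚ
      have hr := hrec (j+1) hmj1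
      rw [show j + 1 - 1 = j from by ring] at hr
      rw [show ((j+1 : ℤ):ℚ) = (j:ℚ)+1 from by push_cast; ring] at hr
      have hApos : (0:ℚ) < (n:ℚ) - 2*((j:ℚ)+1) - 2 := by linarith
      have hub : u (j+1) < ((n:ℚ)*((n:ℚ)-1)/2 + ((n:ℚ) - 2*((j:ℚ)+1) - 3) * u j)
          / ((n:ℚ) - 2*((j:ℚ)+1) - 2) + 1 := by
        rw [hr]; exact Int.ceil_lt_add_one _
      have hstepQ : (((n:ℚ) - 2*((j:ℚ)+1) - 2 - 1)/((n:ℚ) - 2*((j:ℚ)+1) - 2))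
          * ((n:ℚ)*((n:ℚ)-1)/2 - u j) - 1 < (n:ℚ)*((n:ℚ)-1)/2 - u (j+1) := by
        have hid : (n:ℚ)*((n:ℚ)-1)/2 - (((n:ℚ)*((n:ℚ)-1)/2 + ((n:ℚ) - 2*((j:ℚ)+1) - 3) * u j)
              / ((n:ℚ) - 2*((j:ℚ)+1) - 2) + 1)
            = (((n:ℚ) - 2*((j:ℚ)+1) - 2 - 1)/((n:ℚ) - 2*((j:ℚ)+1) - 2))
              * ((n:ℚ)*((n:ℚ)-1)/2 - u j) - 1 := by
          field_simp
          ring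
        have h5 := sub_lt_sub_left hub ((n:ℚ)*((n:ℚ)-1)/2)
        rw [hid] at h5
        exact h5
      -- polynomial bound in ℚ
      have haQ3 : (3:ℚ) ≤ (n:ℚ) - 2*((j:ℚ)+1) - 2 := by linarith
      have haQub : (n:ℚ) - 2*((j:ℚ)+1) - 2 ≤ (n:ℚ) - 2*(m:ℚ) - 2 := by linarith
      have hpolyQ : 2*((n:ℚ) - 2*((j:ℚ)+1) - 2)^2*((n:ℚ) + ((n:ℚ) - 2*((j:ℚ)+1) - 2) - 1/2)
          ≤ 3*((n:ℚ)*((n:ℚ)-1)/2 - u (m-1))*(4*((n:ℚ) - 2*((j:ℚ)+1) - 2)-1) :=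
        poly_bound (n:ℚ) (m:ℚ) ((⌊(n:ℚ)/3⌋ : ℤ):ℚ) _ _ hMlb hMub hFlb hFub haQ3 haQub humv
      -- move to ℝ
      have hv0R : (0:ℝ) < (n:ℝ)*((n:ℝ)-1)/2 - (u (m-1) : ℝ) := by
        have := (Rat.cast_lt (K := ℝ)).mpr hv0
        push_cast at this
        linarith
      have ha3R : (3:ℝ) ≤ (n:ℝ) - 2*((j:ℝ)+1) - 2 := by
        have := (Rat.cast_le (K := ℝ)).mpr haQ3
        push_cast at this
        linarith
      have hnR : (0:ℝ) < (n:ℝ) := by exact_mod_cast hnQ0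
      have hpolyR : 2*((n:ℝ) - 2*((j:ℝ)+1) - 2)^2*((n:ℝ) + ((n:ℝ) - 2*((j:ℝ)+1) - 2) - 1/2)
          ≤ 3*((n:ℝ)*((n:ℝ)-1)/2 - (u (m-1):ℝ))*(4*((n:ℝ) - 2*((j:ℝ)+1) - 2)-1) := by
        have := (Rat.cast_le (K := ℝ)).mpr hpolyQ
        push_cast at this
        convert this using 2 <;> ring
      have hkey := key_step ((n:ℝ) - 2*((j:ℝ)+1) - 2) (n:ℝ)
        ((n:ℝ)*((n:ℝ)-1)/2 - (u (m-1):ℝ)) ha3R hnR hv0R hpolyR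
      have hstepR : (((n:ℝ) - 2*((j:ℝ)+1) - 2 - 1)/((n:ℝ) - 2*((j:ℝ)+1) - 2))
          * ((n:ℝ)*((n:ℝ)-1)/2 - (u j:ℝ)) - 1 < (n:ℝ)*((n:ℝ)-1)/2 - (u (j+1):ℝ) := by
        have := (Rat.cast_lt (K := ℝ)).mpr hstepQ
        push_cast at this
        convert this using 2 <;> ring
      have hratiopos : (0:ℝ) < ((n:ℝ) - 2*((j:ℝ)+1) - 2 - 1)/((n:ℝ) - 2*((j:ℝ)+1) - 2) :=
        div_pos (by linarith) (by linarith)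
      push_cast at IH ⊢
      rw [show (2*(n:ℝ) - 4*(j:ℝ) - 9)/(2*(n:ℝ))
          = (2*((n:ℝ) - 2*((j:ℝ)+1) - 2)-1)/(2*(n:ℝ)) from by ring] at IH
      rw [show (2*(n:ℝ) - 4*((j:ℝ)+1) - 9)/(2*(n:ℝ))
          = (2*((n:ℝ) - 2*((j:ℝ)+1) - 2)-5)/(2*(n:ℝ)) from by ring]
      have hmul := mul_lt_mul_of_pos_left IH hratiopos
      linarith
  -- conclude
  intro k hk1 hk2
  have hC := claim k hk1 hk2
  have hMle : (m:ℚ) - 1 ≤ ((n:ℚ)-5)/2 := by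
    have : ((m:ℚ)) - 1 ≤ (k:ℚ) := by exact_mod_cast hk1
    linarith
  have hv0 : 0 < (n:ℚ)*((n:ℚ)-1)/2 - u (m-1) :=
    v0_pos (n:ℚ) (m:ℚ) ((⌊(n:ℚ)/3⌋ : ℤ):ℚ) _ hMlb hMub hFlb hFub hMle humv
  have hv0R : (0:ℝ) < (((n:ℚ) * ((n:ℚ) - 1) / 2 - u (m - 1) : ℚ) : ℝ) := by
    exact_mod_cast hv0
  rw [lt_div_iff₀ hv0R]
  rw [show (1 - (2 * (k:ℝ) + 9 / 2) / (n:ℝ)) = (2*(n:ℝ) - 4*(k:ℝ) - 9)/(2*(n:ℝ)) from by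
    field_simp
    ring]
  exact hC
end

section
/- Let n ≥ 3 and define m, u_{m-1}, u_k as in the recursive lower-bound sequence for (≤k)-edges. Then for every k with m ≤ k ≤ (n-5)/2, 3·√(1-(2k+9/2)/n)·(C(n,2) - u_{m-1}) ≥ (n-1)(n-2k-3). -/
set_option maxHeartbeats 1000000

/-- Lower bound on the key quantity `D`. -/
lemma Dlb_aux (N M Fl D : ℚ) (hA : 4*N-11 ≤ 9*M) (hB : 9*M ≤ 4*N-3)
    (hC : 3*Fl ≤ N) (hD2 : N ≤ 3*Fl+2) (hN : 23 ≤ N)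
    (hDval : D = N*(N-1)/2 - (3*((M+1)*M/2) + 3*((M+1-Fl)*(M-Fl)/2) - 3*(M-Fl)*(N/3-Fl))) :
    10*N^2 - 42*N + 63/4 ≤ 54 * D := by
  subst hDval
  have h1 : (0:ℚ) ≤ (4*N-3-9*M) * (2*N+18*M+12) :=
    mul_nonneg (by linarith) (by linarith)
  nlinarith [sq_nonneg (N - 3*Fl - 3/2), h1]

lemma endE2_aux (N M Fl D : ℚ) (hA : 4*N-11 ≤ 9*M) (hB : 9*M ≤ 4*N-3)
    (hC : 3*Fl ≤ N) (hD2 : N ≤ 3*Fl+2) (hN : 52 ≤ N)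
    (hDval : D = N*(N-1)/2 - (3*((M+1)*M/2) + 3*((M+1-Fl)*(M-Fl)/2) - 3*(M-Fl)*(N/3-Fl))) :
    8*N*(N-1)^2 ≤ 9*D^2 := by
  have hlb : 10*N^2 - 42*N + 63/4 ≤ 54*D := Dlb_aux N M Fl D hA hB hC hD2 (by linarith) hDval
  clear hDval
  have hy : (0:ℚ) ≤ N - 52 := by linarith
  have hQpos : (0:ℚ) ≤ 10*N^2 - 42*N + 63/4 := by
    nlinarith [mul_nonneg hy (show (0:ℚ) ≤ N by linarith)]
  have hself : (10*N^2-42*N+63/4) * (10*N^2-42*N+63/4) ≤ (54*D) * (54*D) :=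
    mul_self_le_mul_self hQpos hlb
  nlinarith [hself, hy, mul_nonneg hy hy, mul_nonneg (mul_nonneg hy hy) hy,
    mul_nonneg (mul_nonneg hy hy) (mul_nonneg hy hy)]

lemma endET_aux (N M Fl D : ℚ) (hA : 4*N-11 ≤ 9*M) (hB : 9*M ≤ 4*N-3)
    (hC : 3*Fl ≤ N) (hD2 : N ≤ 3*Fl+2) (hN : 52 ≤ N)
    (hDval : D = N*(N-1)/2 - (3*((M+1)*M/2) + 3*((M+1-Fl)*(M-Fl)/2) - 3*(M-Fl)*(N/3-Fl))) :
    N*(N-1)^2*(N-2*M-3)^2 ≤ 9*D^2*(N-2*M-3-3/2) := by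
  have hlb : 10*N^2 - 42*N + 63/4 ≤ 54*D := Dlb_aux N M Fl D hA hB hC hD2 (by linarith) hDval
  clear hDval
  have hy : (0:ℚ) ≤ N - 52 := by linarith
  have hQpos : (0:ℚ) ≤ 10*N^2 - 42*N + 63/4 := by
    nlinarith [mul_nonneg hy (show (0:ℚ) ≤ N by linarith)]
  have hself : (10*N^2-42*N+63/4) * (10*N^2-42*N+63/4) ≤ (54*D) * (54*D) :=
    mul_self_le_mul_self hQpos hlb
  have hTle : 9*(N-2*M-3) ≤ N-5 := by linarith
  have hTge : (0:ℚ) ≤ N-2*M-3 := by linarith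
  have hTsq : 81*(N-2*M-3)^2 ≤ (N-5)^2 := by
    nlinarith [mul_nonneg (show (0:ℚ) ≤ N-5-9*(N-2*M-3) by linarith)
      (show (0:ℚ) ≤ N-5+9*(N-2*M-3) by linarith)]
  have h27 : 2*N-69 ≤ 18*(N-2*M-3)-27 := by linarith
  have hprod1 : (10*N^2-42*N+63/4)*(10*N^2-42*N+63/4)*(2*N-69)
      ≤ ((54*D)*(54*D))*(2*N-69) :=
    mul_le_mul_of_nonneg_right hself (by linarith)
  have hpoly2 : 72*N*(N-1)^2*(N-5)^2
      ≤ (10*N^2-42*N+63/4)*(10*N^2-42*N+63/4)*(2*N-69) := by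
    nlinarith [hy, mul_nonneg hy hy, mul_nonneg (mul_nonneg hy hy) hy,
      mul_nonneg (mul_nonneg hy hy) (mul_nonneg hy hy),
      mul_nonneg (mul_nonneg (mul_nonneg hy hy) hy) (mul_nonneg hy hy)]
  have hprod2 : ((54*D)*(54*D))*(2*N-69) ≤ ((54*D)*(54*D))*(18*(N-2*M-3)-27) :=
    mul_le_mul_of_nonneg_left h27 (mul_self_nonneg _)
  have hprod3 : N*(N-1)^2*(81*(N-2*M-3)^2) ≤ N*(N-1)^2*((N-5)^2) :=
    mul_le_mul_of_nonneg_left hTsq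
      (mul_nonneg (by linarith) (sq_nonneg _))
  nlinarith [hprod1, hpoly2, hprod2, hprod3]

/-- Concavity step: the quadratic in `t = N-2K-3` is nonnegative on `[2, T]`
    given nonnegativity at the endpoints. -/
lemma concav_aux (N M K D : ℚ) (hk1 : M ≤ K) (hk2 : 2*K ≤ N - 5) (hN : 0 ≤ N)
    (ht : N - 2*K - 3 = 2 ∨ 3 ≤ N - 2*K - 3)
    (hE2 : 8*N*(N-1)^2 ≤ 9*D^2)
    (hET : N*(N-1)^2*(N-2*M-3)^2 ≤ 9*D^2*(N-2*M-3-3/2)) :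
    N*((N-1)*(N-2*K-3))^2 ≤ 9*(N-2*K-9/2)*D^2 := by
  rcases ht with h2 | h3
  · have hK : K = (N-5)/2 := by linarith
    subst hK
    nlinarith [hE2]
  · have ht2 : (2:ℚ) ≤ N-2*K-3 := by linarith
    have htT : N-2*K-3 ≤ N-2*M-3 := by linarith
    have hT3 : (3:ℚ) ≤ N-2*M-3 := by linarith
    have p1 : (0:ℚ) ≤ ((N-2*M-3)-(N-2*K-3)) * (9*D^2*(1/2) - 4*N*(N-1)^2) :=
      mul_nonneg (by linarith) (by linarith)
    have p2 : (0:ℚ) ≤ ((N-2*K-3)-2) * (9*D^2*(N-2*M-3-3/2) - N*(N-1)^2*(N-2*M-3)^2) :=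
      mul_nonneg (by linarith) (by linarith)
    have p3 : (0:ℚ) ≤ (N*(N-1)^2) * (((N-2*K-3)-2) * (((N-2*M-3)-(N-2*K-3)) * ((N-2*M-3)-2))) :=
      mul_nonneg (mul_nonneg hN (sq_nonneg _))
        (mul_nonneg (by linarith) (mul_nonneg (by linarith) (by linarith)))
    nlinarith [p1, p2, p3, hT3]

theorem stmt_8 (n : ℤ) (hn : 3 ≤ n) (m : ℤ) (hm : m = ⌈(4 * (n : ℚ) - 11) / 9⌉)
    (u : ℤ → ℚ)
    (hum : u (m - 1) = 3 * C2 ((m : ℚ) + 1) + 3 * C2 ((m : ℚ) + 1 - (⌊(n : ℚ) / 3⌋ : ℚ))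
        - 3 * ((m : ℚ) - (⌊(n : ℚ) / 3⌋ : ℚ)) * ((n : ℚ) / 3 - (⌊(n : ℚ) / 3⌋ : ℚ)))
    (hrec : ∀ k : ℤ, m ≤ k →
      u k = (⌈((n : ℚ) * ((n : ℚ) - 1) / 2 + ((n : ℚ) - 2 * k - 3) * u (k - 1))
              / ((n : ℚ) - 2 * k - 2)⌉ : ℚ))
     :
    ∀ k : ℤ, m ≤ k → (k : ℚ) ≤ ((n : ℚ) - 5) / 2 →
      3 * Real.sqrt (1 - (2 * (k : ℝ) + 9 / 2) / (n : ℝ))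
          * (((n : ℚ) * ((n : ℚ) - 1) / 2 - u (m - 1) : ℚ) : ℝ)
        ≥ ((n : ℝ) - 1) * ((n : ℝ) - 2 * k - 3) := by
  intro k hk1 hk2'
  clear hrec
  -- integer bounds from floor / ceiling
  have hfl : ((⌊(n : ℚ) / 3⌋ : ℤ) : ℚ) ≤ (n : ℚ) / 3 := Int.floor_le _
  have hfu : (n : ℚ) / 3 < (⌊(n : ℚ) / 3⌋ : ℚ) + 1 := Int.lt_floor_add_one _
  have hCz : 3 * ⌊(n : ℚ) / 3⌋ ≤ n := by
    have h : ((3 * ⌊(n : ℚ) / 3⌋ : ℤ) : ℚ) ≤ (n : ℚ) := by push_cast; linarith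
    exact_mod_cast h
  have hDz : n ≤ 3 * ⌊(n : ℚ) / 3⌋ + 2 := by
    have h : (n : ℚ) < ((3 * ⌊(n : ℚ) / 3⌋ + 3 : ℤ) : ℚ) := by push_cast; linarith
    have h2 : n < 3 * ⌊(n : ℚ) / 3⌋ + 3 := by exact_mod_cast h
    omega
  have hAz : 4 * n - 11 ≤ 9 * m := by
    have h := Int.le_ceil ((4 * (n : ℚ) - 11) / 9)
    rw [← hm] at h
    have h2 : ((4 * n - 11 : ℤ) : ℚ) ≤ ((9 * m : ℤ) : ℚ) := by push_cast; linarith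
    exact_mod_cast h2
  have hBz : 9 * m ≤ 4 * n - 3 := by
    have h := Int.ceil_lt_add_one ((4 * (n : ℚ) - 11) / 9)
    rw [← hm] at h
    have h2 : ((9 * m : ℤ) : ℚ) < ((4 * n - 2 : ℤ) : ℚ) := by push_cast; linarith
    have h3 : 9 * m < 4 * n - 2 := by exact_mod_cast h2
    omega
  have hk2z : 2 * k ≤ n - 5 := by
    have h : ((2 * k : ℤ) : ℚ) ≤ ((n - 5 : ℤ) : ℚ) := by push_cast; linarith
    exact_mod_cast h
  have hn23 : (23 : ℤ) ≤ n := by omega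
  have htz : n - 2 * k - 3 = 2 ∨ 3 ≤ n - 2 * k - 3 := by omega
  -- express D explicitly
  obtain ⟨f, hfgen⟩ : ∃ f : ℤ, ⌊(n : ℚ) / 3⌋ = f := ⟨_, rfl⟩
  rw [hfgen] at hum hCz hDz
  obtain ⟨D, hD⟩ : ∃ D : ℚ, D = (n:ℚ)*((n:ℚ)-1)/2 - (3*(((m:ℚ)+1)*(m:ℚ)/2)
      + 3*(((m:ℚ)+1-(f:ℚ))*((m:ℚ)-(f:ℚ))/2)
      - 3*((m:ℚ)-(f:ℚ))*((n:ℚ)/3-(f:ℚ))) := ⟨_, rfl⟩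
  have hDu : (n : ℚ) * ((n : ℚ) - 1) / 2 - u (m - 1) = D := by
    rw [hum, hD]; simp only [C2]; ring
  rw [hDu]
  clear hum hDu hfl hfu hm hk2'
  -- casts of the integer facts
  have hAq : 4*(n:ℚ)-11 ≤ 9*(m:ℚ) := by exact_mod_cast hAz
  have hBq : 9*(m:ℚ) ≤ 4*(n:ℚ)-3 := by exact_mod_cast hBz
  have hCq : 3*(f:ℚ) ≤ (n:ℚ) := by exact_mod_cast hCz
  have hDq : (n:ℚ) ≤ 3*(f:ℚ)+2 := by exact_mod_cast hDz
  have hk1q : (m:ℚ) ≤ (k:ℚ) := by exact_mod_cast hk1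
  have hk2q : 2*(k:ℚ) ≤ (n:ℚ) - 5 := by exact_mod_cast hk2z
  have hNq23 : (23:ℚ) ≤ (n:ℚ) := by exact_mod_cast hn23
  have htq : (n:ℚ) - 2*(k:ℚ) - 3 = 2 ∨ 3 ≤ (n:ℚ) - 2*(k:ℚ) - 3 := by
    rcases htz with h | h
    · left
      have : ((n - 2*k - 3 : ℤ) : ℚ) = ((2:ℤ):ℚ) := by exact_mod_cast h
      push_cast at this; linarith
    · right
      have : ((3:ℤ):ℚ) ≤ ((n - 2*k - 3 : ℤ) : ℚ) := by exact_mod_cast h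
      push_cast at this; linarith
  -- endpoint inequalities
  have hE2ET : 8*(n:ℚ)*((n:ℚ)-1)^2 ≤ 9*D^2
      ∧ (n:ℚ)*((n:ℚ)-1)^2*((n:ℚ)-2*(m:ℚ)-3)^2 ≤ 9*D^2*((n:ℚ)-2*(m:ℚ)-3-3/2) := by
    rcases le_or_gt n 51 with hsmall | hbig
    · have hfv : f = n / 3 := by omega
      have hmv : m = (4*n-3) / 9 := by omega
      subst hfv hmv
      clear hAq hBq hCq hDq hk1q hk2q hNq23 htq htz
      interval_cases n <;>
        first
          | (exfalso; omega)
          | (rw [hD]; norm_num)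
    · have hNq : (52:ℚ) ≤ (n:ℚ) := by exact_mod_cast (by omega : (52:ℤ) ≤ n)
      exact ⟨endE2_aux (n:ℚ) (m:ℚ) (f:ℚ) D hAq hBq hCq hDq hNq hD,
        endET_aux (n:ℚ) (m:ℚ) (f:ℚ) D hAq hBq hCq hDq hNq hD⟩
  have hNnn : (0:ℚ) ≤ (n:ℚ) := by linarith
  have hG := concav_aux (n:ℚ) (m:ℚ) (k:ℚ) D hk1q hk2q hNnn htq hE2ET.1 hE2ET.2
  -- positivity of D
  have hlb := Dlb_aux (n:ℚ) (m:ℚ) (f:ℚ) D hAq hBq hCq hDq hNq23 hD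
  have hDpos : (0:ℚ) < D := by
    nlinarith [hlb, mul_nonneg (show (0:ℚ) ≤ (n:ℚ)-23 by linarith)
      (show (0:ℚ) ≤ 10*(n:ℚ)-42 by linarith)]
  -- rational form with division
  have hNpos : (0:ℚ) < (n:ℚ) := by linarith
  have hkQ : (((n:ℚ)-1)*((n:ℚ)-2*(k:ℚ)-3))^2
      ≤ 9 * (1 - (2*(k:ℚ)+9/2)/(n:ℚ)) * D^2 := by
    have h2 : 9 * (1 - (2*(k:ℚ)+9/2)/(n:ℚ)) * D^2
        = (9 * ((n:ℚ)-2*(k:ℚ)-9/2) * D^2) / (n:ℚ) := by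
      field_simp; ring
    rw [h2, le_div_iff₀ hNpos]
    nlinarith [hG]
  -- pass to the reals
  have hkR : (((n:ℝ)-1)*((n:ℝ)-2*(k:ℝ)-3))^2
      ≤ 9 * (1 - (2*(k:ℝ)+9/2)/(n:ℝ)) * ((D:ℚ):ℝ)^2 := by
    have h := (Rat.cast_le (K := ℝ)).mpr hkQ
    push_cast at h
    linarith
  have hnR : (0:ℝ) < (n:ℝ) := by exact_mod_cast (by omega : (0:ℤ) < n)
  have hn23R : (23:ℝ) ≤ (n:ℝ) := by exact_mod_cast hn23
  have hkR5 : 2*(k:ℝ) ≤ (n:ℝ) - 5 := by exact_mod_cast hk2z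
  have hRnn : (0:ℝ) ≤ ((n:ℝ)-1)*((n:ℝ)-2*(k:ℝ)-3) :=
    mul_nonneg (by linarith) (by linarith)
  have hxnn : (0:ℝ) ≤ 1 - (2*(k:ℝ)+9/2)/(n:ℝ) := by
    have h : (2*(k:ℝ)+9/2)/(n:ℝ) ≤ 1 := by
      rw [div_le_one hnR]; linarith
    linarith
  have hDR : (0:ℝ) ≤ ((D:ℚ):ℝ) := by exact_mod_cast hDpos.le
  rw [ge_iff_le]
  calc ((n:ℝ)-1)*((n:ℝ)-2*(k:ℝ)-3)
      = Real.sqrt ((((n:ℝ)-1)*((n:ℝ)-2*(k:ℝ)-3))^2) := (Real.sqrt_sq hRnn).symm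
    _ ≤ Real.sqrt (9 * (1 - (2*(k:ℝ)+9/2)/(n:ℝ)) * ((D:ℚ):ℝ)^2) :=
        Real.sqrt_le_sqrt hkR
    _ = 3 * Real.sqrt (1 - (2*(k:ℝ)+9/2)/(n:ℝ)) * ((D:ℚ):ℝ) := by
        rw [show 9 * (1 - (2*(k:ℝ)+9/2)/(n:ℝ)) * ((D:ℚ):ℝ)^2
            = (1 - (2*(k:ℝ)+9/2)/(n:ℝ)) * (3 * ((D:ℚ):ℝ))^2 from by ring,
          Real.sqrt_mul hxnn, Real.sqrt_sq (by linarith)]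
        ring
end

section
/- For every integer n ≥ 3, with m = ⌈(4n-11)/9⌉ and u_{m-1} = 3·C(m+1,2) + 3·C(m+1-⌊n/3⌋,2) - 3·(m-⌊n/3⌋)·(n/3-⌊n/3⌋), one has 3·(C(n,2) - u_{m-1}) ≥ (5n² - 25n + 4)/9. -/
theorem stmt_9 (n : ℤ) (hn : 3 ≤ n) (m : ℤ) (hm : m = ⌈(4 * (n : ℚ) - 11) / 9⌉)
    (u : ℚ)
    (hu : u = 3 * C2 ((m : ℚ) + 1) + 3 * C2 ((m : ℚ) + 1 - (⌊(n : ℚ) / 3⌋ : ℚ))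
        - 3 * ((m : ℚ) - (⌊(n : ℚ) / 3⌋ : ℚ)) * ((n : ℚ) / 3 - (⌊(n : ℚ) / 3⌋ : ℚ))) :
    3 * ((n : ℚ) * ((n : ℚ) - 1) / 2 - u) ≥ (5 * (n : ℚ) ^ 2 - 25 * (n : ℚ) + 4) / 9 := by
  have h1 : (4 * (n : ℚ) - 11) / 9 ≤ (m : ℚ) := hm ▸ Int.le_ceil _
  have h2 : (m : ℚ) < (4 * (n : ℚ) - 11) / 9 + 1 := by
    rw [hm]; exact Int.ceil_lt_add_one _
  have h3 : ((⌊(n : ℚ) / 3⌋ : ℤ) : ℚ) ≤ (n : ℚ) / 3 := Int.floor_le _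
  have h4 : (n : ℚ) / 3 < ((⌊(n : ℚ) / 3⌋ : ℤ) : ℚ) + 1 := Int.lt_floor_add_one _
  clear hm
  generalize hg : (⌊(n : ℚ) / 3⌋ : ℤ) = f at h3 h4 hu
  clear hg
  -- integer bounds for m and f
  have hm' : 4 * n - 11 ≤ 9 * m ∧ 9 * m ≤ 4 * n - 3 := by
    constructor
    · have : ((4 * n - 11 : ℤ) : ℚ) ≤ ((9 * m : ℤ) : ℚ) := by push_cast; linarith
      exact_mod_cast this
    · have h : (9 * m : ℤ) < 4 * n - 2 := by
        have : ((9 * m : ℤ) : ℚ) < ((4 * n - 2 : ℤ) : ℚ) := by push_cast; linarith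
        exact_mod_cast this
      omega
  have hf' : 3 * f ≤ n ∧ n ≤ 3 * f + 2 := by
    constructor
    · have : ((3 * f : ℤ) : ℚ) ≤ ((n : ℤ) : ℚ) := by push_cast; linarith
      exact_mod_cast this
    · have h : (n : ℤ) < 3 * f + 3 := by
        have : ((n : ℤ) : ℚ) < ((3 * f + 3 : ℤ) : ℚ) := by push_cast; linarith
        exact_mod_cast this
      omega
  clear h1 h2 h3 h4
  obtain ⟨q, r, hr0, hr9, hnq⟩ : ∃ q r : ℤ, 0 ≤ r ∧ r < 9 ∧ n = 9 * q + r :=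
    ⟨n / 9, n % 9, by omega, by omega, by omega⟩
  subst hnq
  interval_cases r <;>
  · first
      | (have hk : m = 4 * q - 1 := by omega) | (have hk : m = 4 * q := by omega)
      | (have hk : m = 4 * q + 1 := by omega) | (have hk : m = 4 * q + 2 := by omega)
      | (have hk : m = 4 * q + 3 := by omega)
    first
      | (have hj : f = 3 * q := by omega) | (have hj : f = 3 * q + 1 := by omega)
      | (have hj : f = 3 * q + 2 := by omega)
    subst hk hj hu
    simp only [C2]
    push_cast
    ring_nf
    first
      | ((have hq : (1 : ℚ) ≤ (q : ℚ) := by exact_mod_cast (show (1:ℤ) ≤ q by omega)); linarith)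
      | ((have hq : (0 : ℚ) ≤ (q : ℚ) := by exact_mod_cast (show (0:ℤ) ≤ q by omega)); linarith)
end

section
/- The definite integral 24·∫₀^{4/9} (3/2)(1-2x)(x² + max(0, x-1/3)²) dx + 24·∫_{4/9}^{1/2} (1-2x)(1/2 - (5/9)√(1-2x)) dx equals 86/243 + 19/729 = 277/729. -/
open intervalIntegral Set

lemma int1 : (∫ x in (0 : ℝ)..(1 / 3), (3 / 2) * (1 - 2 * x) * (x ^ 2 + (max 0 (x - 1 / 3)) ^ 2))
    = 1 / 108 := by
  have hcongr : ∫ x in (0 : ℝ)..(1 / 3), (3 / 2) * (1 - 2 * x) * (x ^ 2 + (max 0 (x - 1 / 3)) ^ 2)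
      = ∫ x in (0 : ℝ)..(1 / 3), (3 / 2) * (1 - 2 * x) * x ^ 2 := by
    apply integral_congr
    intro x hx
    rw [uIcc_of_le (by norm_num)] at hx
    have : max 0 (x - 1 / 3) = 0 := max_eq_left (by linarith [hx.2])
    simp only [this]
    ring
  rw [hcongr]
  have key : ∀ x ∈ uIcc (0 : ℝ) (1 / 3),
      HasDerivAt (fun x : ℝ => x ^ 3 / 2 - 3 * x ^ 4 / 4)
        ((3 / 2) * (1 - 2 * x) * x ^ 2) x := by
    intro x _
    have h := ((hasDerivAt_pow 3 x).div_const 2).sub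
      (((hasDerivAt_pow 4 x).const_mul 3).div_const 4)
    refine h.congr_deriv ?_
    norm_num
    ring
  rw [integral_eq_sub_of_hasDerivAt key (by apply Continuous.intervalIntegrable; continuity)]
  norm_num

lemma int2 : (∫ x in (1 / 3 : ℝ)..(4 / 9), (3 / 2) * (1 - 2 * x) * (x ^ 2 + (max 0 (x - 1 / 3)) ^ 2))
    = 4 / 729 := by
  have hcongr : ∫ x in (1 / 3 : ℝ)..(4 / 9), (3 / 2) * (1 - 2 * x) * (x ^ 2 + (max 0 (x - 1 / 3)) ^ 2)
      = ∫ x in (1 / 3 : ℝ)..(4 / 9), (3 / 2) * (1 - 2 * x) * (x ^ 2 + (x - 1 / 3) ^ 2) := by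
    apply integral_congr
    intro x hx
    rw [uIcc_of_le (by norm_num)] at hx
    have : max 0 (x - 1 / 3) = x - 1 / 3 := max_eq_right (by linarith [hx.1])
    simp only [this]
  rw [hcongr]
  have key : ∀ x ∈ uIcc (1 / 3 : ℝ) (4 / 9),
      HasDerivAt (fun x : ℝ => -(3 * x ^ 4) / 2 + 5 * x ^ 3 / 3 - 2 * x ^ 2 / 3 + x / 6)
        ((3 / 2) * (1 - 2 * x) * (x ^ 2 + (x - 1 / 3) ^ 2)) x := by
    intro x _
    have h := (((((hasDerivAt_pow 4 x).const_mul 3).neg.div_const 2).add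
      (((hasDerivAt_pow 3 x).const_mul 5).div_const 3)).sub
      (((hasDerivAt_pow 2 x).const_mul 2).div_const 3)).add ((hasDerivAt_id x).div_const 6)
    refine h.congr_deriv ?_
    norm_num
    ring
  rw [integral_eq_sub_of_hasDerivAt key (by apply Continuous.intervalIntegrable; continuity)]
  norm_num

lemma int3 : (∫ x in (4 / 9 : ℝ)..(1 / 2), (1 - 2 * x) * (1 / 2 - (5 / 9) * Real.sqrt (1 - 2 * x)))
    = 19 / 17496 := by
  have key : ∀ x ∈ Ioo (4 / 9 : ℝ) (1 / 2),
      HasDerivAt (fun x : ℝ => -((1 - 2 * x) ^ 2) / 8 +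
          (1 / 9) * ((1 - 2 * x) ^ 2 * Real.sqrt (1 - 2 * x)))
        ((1 - 2 * x) * (1 / 2 - (5 / 9) * Real.sqrt (1 - 2 * x))) x := by
    intro x hx
    have hu0 : (0 : ℝ) < 1 - 2 * x := by linarith [hx.2]
    have hu : HasDerivAt (fun x : ℝ => 1 - 2 * x) (-(2 * 1)) x :=
      ((hasDerivAt_id x).const_mul 2).const_sub 1
    have hs : HasDerivAt (fun x : ℝ => Real.sqrt (1 - 2 * x))
        (1 / (2 * Real.sqrt (1 - 2 * x)) * (-(2 * 1))) x :=
      (Real.hasDerivAt_sqrt hu0.ne').comp x hu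
    have h := (((hu.pow 2).neg.div_const 8)).add (((hu.pow 2).mul hs).const_mul (1 / 9))
    refine h.congr_deriv ?_
    have hsq : Real.sqrt (1 - 2 * x) ^ 2 = 1 - 2 * x := Real.sq_sqrt hu0.le
    have hspos : 0 < Real.sqrt (1 - 2 * x) := Real.sqrt_pos.mpr hu0
    simp only [Pi.pow_apply, Nat.cast_ofNat, show (2 - 1 : ℕ) = 1 from rfl, pow_one]
    field_simp
    nlinarith [hsq, hspos]
  have hcont : ContinuousOn (fun x : ℝ => -((1 - 2 * x) ^ 2) / 8 +
      (1 / 9) * ((1 - 2 * x) ^ 2 * Real.sqrt (1 - 2 * x))) (Icc (4 / 9 : ℝ) (1 / 2)) := by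
    apply Continuous.continuousOn
    continuity
  have hint : IntervalIntegrable
      (fun x : ℝ => (1 - 2 * x) * (1 / 2 - (5 / 9) * Real.sqrt (1 - 2 * x)))
      MeasureTheory.volume (4 / 9) (1 / 2) := by
    apply Continuous.intervalIntegrable
    continuity
  rw [integral_eq_sub_of_hasDerivAt_of_le (by norm_num) hcont key hint]
  rw [show (1 : ℝ) - 2 * (1 / 2) = 0 by norm_num, show (1 : ℝ) - 2 * (4 / 9) = 1 / 9 by norm_num]
  rw [show Real.sqrt (1 / 9) = 1 / 3 by
    rw [show (1 / 9 : ℝ) = (1 / 3) ^ 2 by norm_num, Real.sqrt_sq (by norm_num)]]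
  norm_num

theorem stmt_10 :
    24 * (∫ x in (0 : ℝ)..(4 / 9), (3 / 2) * (1 - 2 * x) * (x ^ 2 + (max 0 (x - 1 / 3)) ^ 2))
      + 24 * (∫ x in (4 / 9 : ℝ)..(1 / 2), (1 - 2 * x) * (1 / 2 - (5 / 9) * Real.sqrt (1 - 2 * x)))
      = 86 / 243 + 19 / 729 ∧ (86 / 243 + 19 / 729 : ℝ) = 277 / 729 := by
  constructor
  · have hsplit : (∫ x in (0 : ℝ)..(1 / 3), (3 / 2) * (1 - 2 * x) * (x ^ 2 + (max 0 (x - 1 / 3)) ^ 2))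
        + (∫ x in (1 / 3 : ℝ)..(4 / 9), (3 / 2) * (1 - 2 * x) * (x ^ 2 + (max 0 (x - 1 / 3)) ^ 2))
        = ∫ x in (0 : ℝ)..(4 / 9), (3 / 2) * (1 - 2 * x) * (x ^ 2 + (max 0 (x - 1 / 3)) ^ 2) := by
      apply integral_add_adjacent_intervals <;>
        · apply Continuous.intervalIntegrable
          exact ((continuous_const.mul (continuous_const.sub (continuous_const.mul continuous_id))).mul
            ((continuous_pow 2).add (((continuous_const.max (continuous_id.sub continuous_const))).pow 2)))
    rw [← hsplit, int1, int2, int3]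
    norm_num
  · norm_num
end

section
/- Let π be a halfperiod of a simple allowable sequence Π on [n] and let 1 ≤ k < n/2. If s(k,π) denotes the minimum over all permutations π_i in π of the number of elements of the initial k-center C₀ that lie in the k-center of π_i, then s(k,π) ≤ n - 2k - 1. -/
/-- A halfperiod of a simple allowable sequence on `[n]`: a sequence of `C(n,2)+1`
permutations of `Fin n` (where `perm i j` is the element at position `j`), such that
consecutive permutations differ by a transposition of adjacent positions
(recorded by `trans`), and the last permutation is the reverse of the first. -/
structure Halfperiod (n : ℕ) where
  perm : Fin (n.choose 2 + 1) → Equiv.Perm (Fin n)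
  trans : Fin (n.choose 2) → ℕ
  trans_lt : ∀ i, trans i + 1 < n
  adjacent : ∀ i : Fin (n.choose 2),
    perm i.succ = perm i.castSucc *
      Equiv.swap ⟨trans i, Nat.lt_of_succ_lt (trans_lt i)⟩ ⟨trans i + 1, trans_lt i⟩
  reversal : ∀ j : Fin n, perm (Fin.last (n.choose 2)) j = perm 0 j.rev

/-- The `k`-center of a permutation: the set of elements occupying the middle
`n - 2k` positions. -/
def kCenter (n k : ℕ) (σ : Equiv.Perm (Fin n)) : Finset (Fin n) :=
  (Finset.univ.filter (fun p : Fin n => k ≤ (p : ℕ) ∧ (p : ℕ) < n - k)).image σ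


lemma mem_kCenter_iff (n k : ℕ) (σ : Equiv.Perm (Fin n)) (x : Fin n) :
    x ∈ kCenter n k σ ↔ k ≤ ((σ⁻¹ x : Fin n) : ℕ) ∧ ((σ⁻¹ x : Fin n) : ℕ) < n - k := by
  simp only [kCenter, Finset.mem_image, Finset.mem_filter, Finset.mem_univ, true_and]
  constructor
  · rintro ⟨p, hp, rfl⟩; simpa using hp
  · intro h; exact ⟨σ⁻¹ x, h, by simp⟩

lemma kCenter_card (n k : ℕ) (hk1 : 1 ≤ k) (hk2 : 2 * k < n) (σ : Equiv.Perm (Fin n)) :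
    (kCenter n k σ).card = n - 2 * k := by
  rw [kCenter, Finset.card_image_of_injective _ σ.injective]
  have h1 : k < n := by omega
  have h2 : n - k < n := by omega
  have : (Finset.univ.filter (fun p : Fin n => k ≤ (p : ℕ) ∧ (p : ℕ) < n - k))
      = Finset.Ico (⟨k, h1⟩ : Fin n) ⟨n - k, h2⟩ := by
    ext p
    simp [Finset.mem_Ico, Fin.le_def, Fin.lt_def]
  rw [this, Fin.card_Ico]
  simp; omega
set_option maxHeartbeats 1000000 in
theorem stmt_12 (n k : ℕ) (hk1 : 1 ≤ k) (hk2 : 2 * k < n) (H : Halfperiod n) :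
    Finset.univ.inf'
        (Finset.univ_nonempty : (Finset.univ : Finset (Fin (n.choose 2 + 1))).Nonempty)
        (fun i => ((kCenter n k (H.perm 0)) ∩ (kCenter n k (H.perm i))).card)
      ≤ n - 2 * k - 1 := by
  by_contra hcon
  push_neg at hcon
  rw [Finset.lt_inf'_iff] at hcon
  have hn : 0 < n := by omega
  set N := n.choose 2 with hNdef
  -- all centers are equal to the initial one
  have hCeq : ∀ i, kCenter n k (H.perm i) = kCenter n k (H.perm 0) := by
    intro i
    have h1 := hcon i (Finset.mem_univ i)
    have c0 := kCenter_card n k hk1 hk2 (H.perm 0)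
    have ci := kCenter_card n k hk1 hk2 (H.perm i)
    have hsub1 : (kCenter n k (H.perm 0)) ∩ (kCenter n k (H.perm i)) ⊆ kCenter n k (H.perm i) :=
      Finset.inter_subset_right
    have hsub0 : (kCenter n k (H.perm 0)) ∩ (kCenter n k (H.perm i)) ⊆ kCenter n k (H.perm 0) :=
      Finset.inter_subset_left
    have hle : ((kCenter n k (H.perm 0)) ∩ (kCenter n k (H.perm i))).card
        ≤ (kCenter n k (H.perm i)).card := Finset.card_le_card hsub1
    have e1 : (kCenter n k (H.perm 0)) ∩ (kCenter n k (H.perm i)) = kCenter n k (H.perm i) :=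
      Finset.eq_of_subset_of_card_le hsub1 (by omega)
    have e0 : (kCenter n k (H.perm 0)) ∩ (kCenter n k (H.perm i)) = kCenter n k (H.perm 0) :=
      Finset.eq_of_subset_of_card_le hsub0 (by omega)
    rw [← e1, e0]
  -- the tracked element, starting at position 0
  set b : Fin n := H.perm 0 ⟨0, hn⟩ with hbdef
  -- position of b at time i (clamped at N)
  set f : ℕ → ℕ := fun i =>
    (((H.perm ⟨min i N, Nat.lt_succ_of_le (min_le_right _ _)⟩)⁻¹ b : Fin n) : ℕ) with hfdef
  have hf0 : f 0 = 0 := by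
    have : (⟨min 0 N, Nat.lt_succ_of_le (min_le_right _ _)⟩ : Fin (N + 1)) = 0 := by
      ext; simp
    simp only [hfdef, this, hbdef, Equiv.Perm.inv_def, Equiv.symm_apply_apply]
  have hfN : f N = n - 1 := by
    have hidx : (⟨min N N, Nat.lt_succ_of_le (min_le_right _ _)⟩ : Fin (N + 1)) = Fin.last N := by
      ext; simp
    have key : H.perm (Fin.last N) ⟨n - 1, by omega⟩ = b := by
      rw [hbdef, H.reversal]
      congr 1
      ext
      simp [Fin.val_rev]
      omega
    simp only [hfdef, hidx]
    rw [← key, Equiv.Perm.inv_def, Equiv.symm_apply_apply]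
  have hstep : ∀ i, f (i + 1) ≤ f i + 1 := by
    intro i
    by_cases hi : i < N
    · have hidx1 : (⟨min (i + 1) N, Nat.lt_succ_of_le (min_le_right _ _)⟩ : Fin (N + 1))
          = (⟨i, hi⟩ : Fin N).succ := by
        ext; simp [Nat.min_eq_left hi]
      have hidx0 : (⟨min i N, Nat.lt_succ_of_le (min_le_right _ _)⟩ : Fin (N + 1))
          = (⟨i, hi⟩ : Fin N).castSucc := by
        ext; simp [Nat.min_eq_left hi.le]
      have hadj := H.adjacent ⟨i, hi⟩
      simp only [hfdef, hidx1, hidx0, hadj, mul_inv_rev, Equiv.swap_inv,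
        Equiv.Perm.mul_apply]
      rw [Equiv.swap_apply_def]
      split_ifs with h1 h2
      · simp [Fin.ext_iff] at h1 ⊢; omega
      · simp [Fin.ext_iff] at h2 ⊢; omega
      · omega
    · have : min (i + 1) N = min i N := by omega
      simp only [hfdef, this]
      omega
  have hex : ∃ i, k ≤ f i := ⟨N, by omega⟩
  set i₀ := Nat.find hex with hi₀
  have hki₀ : k ≤ f i₀ := Nat.find_spec hex
  have hi₀le : i₀ ≤ N := Nat.find_le (by omega)
  have hi₀ne : i₀ ≠ 0 := by
    intro h
    rw [h, hf0] at hki₀; omega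
  have hprev : ¬ k ≤ f (i₀ - 1) := Nat.find_min hex (by omega)
  have hfi₀ : f i₀ = k := by
    have := hstep (i₀ - 1)
    have h1 : i₀ - 1 + 1 = i₀ := by omega
    rw [h1] at this
    omega
  -- b is in the k-center at time i₀
  have hidx : (⟨min i₀ N, Nat.lt_succ_of_le (min_le_right _ _)⟩ : Fin (N + 1))
      = ⟨i₀, by omega⟩ := by ext; simp [Nat.min_eq_left hi₀le]
  have hbmem : b ∈ kCenter n k (H.perm (⟨i₀, by omega⟩ : Fin (N + 1))) := by
    rw [mem_kCenter_iff]
    have : (((H.perm (⟨i₀, by omega⟩ : Fin (N + 1)))⁻¹ b : Fin n) : ℕ) = f i₀ := by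
      simp only [hfdef, hidx]
    rw [this, hfi₀]
    omega
  rw [hCeq, mem_kCenter_iff, hbdef, Equiv.Perm.inv_def, Equiv.symm_apply_apply] at hbmem
  simp at hbmem
  omega
end

section
/- For every odd integer n ≥ 9, ⌊(2/3)·C(n,2) - (2/3)·L(n) + 1/3⌋ ≤ ⌊(n-3)(n+45)/18 + 1/9⌋, where L(n) = 3·C(k+2,2) + 3·C(k+2-⌊n/3⌋,2) - max(0, (k+1-⌊n/3⌋)(n-3⌊n/3⌋)) with k = (n-1)/2 - 3. -/
theorem stmt_18 (n : ℤ) (hodd : Odd n) (hn : 9 ≤ n) (k : ℤ) (hk : k = (n - 1) / 2 - 3)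
    (L : ℚ)
    (hL : L = 3 * C2 ((k : ℚ) + 2) + 3 * C2 ((k : ℚ) + 2 - (⌊(n : ℚ) / 3⌋ : ℚ))
        - max 0 (((k : ℚ) + 1 - (⌊(n : ℚ) / 3⌋ : ℚ)) * ((n : ℚ) - 3 * (⌊(n : ℚ) / 3⌋ : ℚ)))) :
    ⌊(2 / 3 : ℚ) * ((n : ℚ) * ((n : ℚ) - 1) / 2) - (2 / 3) * L + 1 / 3⌋
      ≤ ⌊(((n : ℚ) - 3) * ((n : ℚ) + 45)) / 18 + 1 / 9⌋ := by
  obtain ⟨t, ht⟩ := hodd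
  have h2k : 2 * k = n - 7 := by omega
  set m : ℤ := n / 3 with hmdef
  have hm : ⌊(n : ℚ) / 3⌋ = m := by
    have := Rat.floor_intCast_div_natCast n 3
    simpa using this
  set r : ℤ := n - 3 * m with hrdef
  have hr0 : 0 ≤ r := by omega
  have hr2 : r ≤ 2 := by omega
  have hm3 : 3 * m = n - r := by omega
  -- the max term is the product itself
  have hprodZ : (0 : ℤ) ≤ (k + 1 - m) * (n - 3 * m) := by
    rcases eq_or_lt_of_le hr0 with h | h
    · have : n - 3 * m = 0 := by omega
      rw [this, mul_zero]
    · have h1 : 0 ≤ k + 1 - m := by omega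
      have h2 : 0 ≤ n - 3 * m := by omega
      exact mul_nonneg h1 h2
  have hmax : max (0:ℚ) (((k : ℚ) + 1 - (⌊(n : ℚ) / 3⌋ : ℚ)) * ((n : ℚ) - 3 * (⌊(n : ℚ) / 3⌋ : ℚ)))
      = ((k : ℚ) + 1 - (m : ℚ)) * ((n : ℚ) - 3 * (m : ℚ)) := by
    rw [hm]
    apply max_eq_right
    exact_mod_cast hprodZ
  -- integer forms of both sides
  set a : ℤ := n * (n - 1) - 3 * (k + 2) * (k + 1) - 3 * (k + 2 - m) * (k + 1 - m)
      + 2 * (k + 1 - m) * (n - 3 * m) + 1 with hadef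
  set d : ℤ := (n - 3) * (n + 45) + 2 with hddef
  have hlhs : (2 / 3 : ℚ) * ((n : ℚ) * ((n : ℚ) - 1) / 2) - (2 / 3) * L + 1 / 3
      = (a : ℚ) / 3 := by
    rw [hL, hmax, hm, hadef, C2, C2]
    push_cast
    ring
  have hrhs : (((n : ℚ) - 3) * ((n : ℚ) + 45)) / 18 + 1 / 9 = (d : ℚ) / 18 := by
    rw [hddef]; push_cast; ring
  rw [hlhs, hrhs]
  have hfl : ⌊(a : ℚ) / 3⌋ = a / 3 := by
    have := Rat.floor_intCast_div_natCast a 3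
    simpa using this
  have hfr : ⌊(d : ℚ) / 18⌋ = d / 18 := by
    have := Rat.floor_intCast_div_natCast d 18
    simpa using this
  rw [hfl, hfr]
  -- key polynomial identities
  have hm3' : 3 * m = 2 * k + 7 - r := by omega
  have h9a : 9 * a = 6 * k ^ 2 + 168 * k + 321 - 9 * r + 3 * r ^ 2 := by
    rw [hadef]
    linear_combination (18 * m - 36 * k - 9 * n - 72) * h2k + (9 * m - 6 * k - 3 * r - 12) * hm3'
  have h9d : 9 * d = 36 * k ^ 2 + 1008 * k + 1890 := by
    rw [hddef]
    linear_combination (-18 * k - 9 * n - 441) * h2k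
  rcases eq_or_lt_of_le hr0 with h | h
  · -- r = 0 : n divisible by 3
    have hk1 : k % 3 = 1 := by omega
    obtain ⟨s, hs⟩ : ∃ s, k = 3 * s + 1 := ⟨(k - 1) / 3, by omega⟩
    have h9a' : 9 * a = 54 * (s * s) + 540 * s + 495 := by
      linear_combination h9a + (6 * k + 18 * s + 174) * hs + (9 - 3 * r) * h
    have hd6 : 9 * d = 54 * a - 36 := by
      linear_combination h9d - 6 * h9a + (18 * r - 54) * h
    set e : ℤ := s * s with hedef
    omega
  · -- r = 1 or r = 2 : d = 6a
    have hr12 : r = 1 ∨ r = 2 := by omega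
    have hd6 : 9 * d = 54 * a := by
      rcases hr12 with h1 | h2
      · linear_combination h9d - 6 * h9a + (36 - 18 * r) * h1
      · linear_combination h9d - 6 * h9a + (18 - 18 * r) * h2
    omega
end

section
/- For every even integer n ≥ 8, ⌊(1/2)·C(n,2) - (1/2)·L(n)⌋ ≤ ⌊n(n+30)/24 - 3⌋, where L(n) = 3·C(k+2,2) + 3·C(k+2-⌊n/3⌋,2) - max(0, (k+1-⌊n/3⌋)(n-3⌊n/3⌋)) with k = n/2 - 3. -/
theorem stmt_19 (n : ℤ) (hev : Even n) (hn : 8 ≤ n) (k : ℤ) (hk : k = n / 2 - 3)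
    (L : ℚ)
    (hL : L = 3 * C2 ((k : ℚ) + 2) + 3 * C2 ((k : ℚ) + 2 - (⌊(n : ℚ) / 3⌋ : ℚ))
        - max 0 (((k : ℚ) + 1 - (⌊(n : ℚ) / 3⌋ : ℚ)) * ((n : ℚ) - 3 * (⌊(n : ℚ) / 3⌋ : ℚ)))) :
    ⌊(1 / 2 : ℚ) * ((n : ℚ) * ((n : ℚ) - 1) / 2) - (1 / 2) * L⌋
      ≤ ⌊((n : ℚ) * ((n : ℚ) + 30)) / 24 - 3⌋ := by
  apply Int.floor_mono
  obtain ⟨m, hm⟩ := hev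
  have hkm : k = m - 3 := by omega
  have hfl : ⌊(n : ℚ) / 3⌋ = n / 3 := by
    have := Rat.floor_intCast_div_natCast n 3
    simpa using this
  set t : ℤ := n / 3 with htdef
  have hnQ : (n : ℚ) = (m : ℚ) + (m : ℚ) := by exact_mod_cast congrArg (Int.cast : ℤ → ℚ) hm
  have hkQ : (k : ℚ) = (m : ℚ) - 3 := by exact_mod_cast congrArg (Int.cast : ℤ → ℚ) hkm
  have hm4 : (4 : ℚ) ≤ (m : ℚ) := by
    have : (4 : ℤ) ≤ m := by omega
    exact_mod_cast this
  rw [hL, hfl]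
  unfold C2
  have hd : 3 * t = n ∨ 3 * t = n - 1 ∨ 3 * t = n - 2 := by omega
  rcases hd with h | h | h <;>
  · have hts : (t : ℚ) = ((m : ℚ) + (m : ℚ) - ((n : ℚ) - 3 * (t : ℚ))) / 3 := by
      push_cast [hnQ]; ring
    have h3t : 3 * (t : ℚ) = (3 * t : ℤ) := by push_cast; ring
    rw [h] at h3t
    push_cast at h3t
    rcases le_or_gt (((k : ℚ) + 1 - (t : ℚ)) * ((n : ℚ) - 3 * (t : ℚ))) 0 with hc | hc
    · rw [max_eq_left hc]
      nlinarith [hm4, hkQ, hnQ, h3t, hc]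
    · rw [max_eq_right hc.le]
      nlinarith [hm4, hkQ, hnQ, h3t, hc]
end
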